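/- The dual cone of the extended second order cone L(k,ℓ) = {(x,u) ∈ ℝ^k × ℝ^ℓ : x_i ≥ ‖u‖ for all i} is M(k,ℓ) = {(y,v) ∈ ℝ^k × ℝ^ℓ : e^⊤ y ≥ ‖v‖ and y ≥ 0}. -/

import Mathlib

open RealInnerProductSpace

theorem stmt1 (k l : ℕ) (hk : 0 < k) (hl : 0 < l)
    (y : EuclideanSpace ℝ (Fin k)) (v : EuclideanSpace ℝ (Fin l)) :
    (∀ (x : EuclideanSpace ℝ (Fin k)) (u : EuclideanSpace ℝ (Fin l)),
        (∀ i, ‖u‖ ≤ x i) → 0 ≤ ⟪x, y⟫ + ⟪u, v⟫) ↔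
      (‖v‖ ≤ ∑ i, y i ∧ ∀ i, 0 ≤ y i) := by
  constructor
  · intro h
    have hy : ∀ i, 0 ≤ y i := by
      intro i
      have := h (EuclideanSpace.single i 1) 0 (by
        intro j
        simp [EuclideanSpace.single_apply]
        positivity)
      simpa [EuclideanSpace.inner_single_left] using this
    refine ⟨?_, hy⟩
    rcases eq_or_ne v 0 with hv | hv
    · simp [hv]
      exact Finset.sum_nonneg fun i _ => hy i
    · have hvn : (0:ℝ) < ‖v‖ := norm_pos_iff.mpr hv
      set u : EuclideanSpace ℝ (Fin l) := -(‖v‖⁻¹ • v) with hu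
      have hun : ‖u‖ = 1 := by
        rw [hu, norm_neg, norm_smul, norm_inv, norm_norm, inv_mul_cancel₀ hvn.ne']
      let x1 : EuclideanSpace ℝ (Fin k) := WithLp.toLp 2 (fun _ => 1)
      have hx : ∀ i, ‖u‖ ≤ x1 i := by
        intro i; rw [hun]
      have key := h x1 u hx
      have h1 : ⟪x1, y⟫ = ∑ i, y i := by
        simp [PiLp.inner_apply, x1]
      have h2 : ⟪u, v⟫ = -‖v‖ := by
        rw [hu, inner_neg_left, real_inner_smul_left, real_inner_self_eq_norm_sq]
        field_simp
      rw [h1, h2] at key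
      linarith
  · rintro ⟨hv, hy⟩ x u hx
    have h1 : ⟪x, y⟫ = ∑ i, x i * y i := by simp [PiLp.inner_apply, mul_comm]
    have h2 : ‖u‖ * ∑ i, y i ≤ ∑ i, x i * y i := by
      rw [Finset.mul_sum]
      exact Finset.sum_le_sum fun i _ => mul_le_mul_of_nonneg_right (hx i) (hy i)
    have h3 : ‖u‖ * ‖v‖ ≤ ‖u‖ * ∑ i, y i :=
      mul_le_mul_of_nonneg_left hv (norm_nonneg u)
    have h4 : -(‖u‖ * ‖v‖) ≤ ⟪u, v⟫ :=
      neg_le_of_abs_le (abs_real_inner_le_norm u v)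
    rw [h1] at *
    linarith
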